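/- Let 0 < α < 1/2 and let the discrete dissipation operator be defined on sequences a = (a_k)_{k≥0} by (ℒ^α a)_k = Σ_{n=0}^{k-1} (a_k − a_n) 2^{2αn} + Σ_{n=k+1}^{∞} (a_k − a_n) 2^{2αk} 2^{k−n}. If a ∈ ℓ^∞ and Σ_{k} |a_k − a_{k-1}| 2^{sk} < ∞ for some s > 2α, then Σ_{k=0}^{∞} (ℒ^α a)_k 2^{−k} = 0. -/

import Mathlib

/-- The discrete dissipation operator `(ℒ^α a)_k`. -/
noncomputable def Ldiss (α : ℝ) (a : ℕ → ℝ) (k : ℕ) : ℝ :=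
  (∑ n ∈ Finset.range k, (a k - a n) * (2:ℝ) ^ (2 * α * (n:ℝ))) +
  ∑' n : ℕ, (a k - a (k + 1 + n)) * (2:ℝ) ^ (2 * α * (k:ℝ)) * (2:ℝ) ^ (-(1:ℝ) - (n:ℝ))

theorem stmt0 (α : ℝ) (hα0 : 0 < α) (hα1 : α < 1/2) (a : ℕ → ℝ)
    (hbdd : ∃ M : ℝ, ∀ k, |a k| ≤ M)
    (s : ℝ) (hs : 2 * α < s)
    (hsum : Summable (fun k : ℕ => |a (k+1) - a k| * (2:ℝ) ^ (s * ((k:ℝ)+1)))) :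
    ∑' k : ℕ, Ldiss α a k * (2:ℝ) ^ (-(k:ℝ)) = 0 := by
  have hs0 : 0 < s := lt_trans (by positivity) hs
  set C : ℝ := ∑' j : ℕ, |a (j+1) - a j| * (2:ℝ) ^ (s * ((j:ℝ)+1)) with hCdef
  have hCnn : 0 ≤ C := tsum_nonneg (fun j => by positivity)
  -- difference bound
  have hdiff : ∀ m k : ℕ, m ≤ k → |a k - a m| ≤ C * (2:ℝ) ^ (-(s * (m:ℝ))) := by
    intro m k hmk
    have htel : a k - a m = ∑ j ∈ Finset.Ico m k, (a (j+1) - a j) := by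
      rw [Finset.sum_Ico_eq_sub _ hmk, Finset.sum_range_sub, Finset.sum_range_sub]
      ring
    calc |a k - a m| ≤ ∑ j ∈ Finset.Ico m k, |a (j+1) - a j| := by
          rw [htel]; exact Finset.abs_sum_le_sum_abs _ _
      _ ≤ ∑ j ∈ Finset.Ico m k, |a (j+1) - a j| * (2:ℝ) ^ (s * ((j:ℝ)+1)) * (2:ℝ) ^ (-(s * (m:ℝ))) := by
          apply Finset.sum_le_sum
          intro j hj
          have hjm : (m:ℝ) ≤ (j:ℝ) + 1 := by
            have h' := (Finset.mem_Ico.mp hj).1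
            have : (m:ℝ) ≤ (j:ℝ) := by exact_mod_cast h'
            linarith
          have h1 : (1:ℝ) ≤ (2:ℝ) ^ (s * ((j:ℝ)+1)) * (2:ℝ) ^ (-(s * (m:ℝ))) := by
            rw [← Real.rpow_add (by norm_num)]
            have : (0:ℝ) ≤ s * ((j:ℝ)+1) + -(s * (m:ℝ)) := by nlinarith
            calc (1:ℝ) = (2:ℝ) ^ (0:ℝ) := by simp
              _ ≤ _ := Real.rpow_le_rpow_of_exponent_le (by norm_num) this
          nlinarith [abs_nonneg (a (j+1) - a j), mul_le_mul_of_nonneg_left h1 (abs_nonneg (a (j+1) - a j))]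
      _ ≤ C * (2:ℝ) ^ (-(s * (m:ℝ))) := by
          rw [← Finset.sum_mul]
          apply mul_le_mul_of_nonneg_right _ (by positivity)
          exact Summable.sum_le_tsum _ (fun j _ => by positivity) hsum
  -- the symmetric kernel function
  set f : ℕ × ℕ → ℝ := fun p =>
    (a p.1 - a p.2) * ((2:ℝ) ^ (2 * α * ((min p.1 p.2 : ℕ):ℝ)) *
      (2:ℝ) ^ (-((max p.1 p.2 : ℕ):ℝ))) with hfdef
  have hanti : ∀ p : ℕ × ℕ, f (p.2, p.1) = - f p := by
    intro ⟨k, n⟩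
    simp only [hfdef, min_comm, max_comm]
    ring
  have hdiag : ∀ k : ℕ, f (k, k) = 0 := by intro k; simp [hfdef]
  -- bound on |f|
  have hbnd2 : ∀ k n : ℕ, n ≤ k → |f (k, n)| ≤ C * ((2:ℝ) ^ (-(k:ℝ)/2) * (2:ℝ) ^ (-(n:ℝ)/2)) := by
    intro k n hnk
    have hmin : min k n = n := min_eq_right hnk
    have hmax : max k n = k := max_eq_left hnk
    have h1 : |f (k, n)| = |a k - a n| * ((2:ℝ) ^ (2 * α * (n:ℝ)) * (2:ℝ) ^ (-(k:ℝ))) := by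
      rw [hfdef]
      simp only [hmin, hmax]
      rw [abs_mul, abs_of_nonneg (show (0:ℝ) ≤ (2:ℝ) ^ (2 * α * (n:ℝ)) * (2:ℝ) ^ (-(k:ℝ)) by positivity)]
    rw [h1]
    have h2 : |a k - a n| * ((2:ℝ) ^ (2 * α * (n:ℝ)) * (2:ℝ) ^ (-(k:ℝ)))
        ≤ (C * (2:ℝ) ^ (-(s * (n:ℝ)))) * ((2:ℝ) ^ (2 * α * (n:ℝ)) * (2:ℝ) ^ (-(k:ℝ))) := by
      exact mul_le_mul_of_nonneg_right (hdiff n k hnk) (by positivity)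
    refine h2.trans ?_
    have heq : (C * (2:ℝ) ^ (-(s * (n:ℝ)))) * ((2:ℝ) ^ (2 * α * (n:ℝ)) * (2:ℝ) ^ (-(k:ℝ)))
        = C * (2:ℝ) ^ (-(s * (n:ℝ)) + 2 * α * (n:ℝ) + -(k:ℝ)) := by
      rw [Real.rpow_add (by norm_num), Real.rpow_add (by norm_num)]
      ring
    rw [heq, ← Real.rpow_add (by norm_num)]
    apply mul_le_mul_of_nonneg_left _ hCnn
    apply Real.rpow_le_rpow_of_exponent_le (by norm_num)
    have hkn : (n:ℝ) ≤ (k:ℝ) := Nat.cast_le.mpr hnk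
    nlinarith
  have hbnd : ∀ p : ℕ × ℕ, |f p| ≤ C * ((2:ℝ) ^ (-(p.1:ℝ)/2) * (2:ℝ) ^ (-(p.2:ℝ)/2)) := by
    intro ⟨k, n⟩
    rcases le_total n k with h | h
    · exact hbnd2 k n h
    · have := hbnd2 n k h
      have h2 : f (k, n) = - f (n, k) := by rw [hanti (n, k)]
      rw [h2, abs_neg]
      calc |f (n, k)| ≤ C * ((2:ℝ) ^ (-(n:ℝ)/2) * (2:ℝ) ^ (-(k:ℝ)/2)) := this
        _ = C * ((2:ℝ) ^ (-(k:ℝ)/2) * (2:ℝ) ^ (-(n:ℝ)/2)) := by ring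
  -- summability
  have hgeo2 : Summable (fun k : ℕ => (2:ℝ) ^ (-(k:ℝ)/2)) := by
    have : ∀ k : ℕ, (2:ℝ) ^ (-(k:ℝ)/2) = ((2:ℝ) ^ (-(1:ℝ)/2)) ^ k := by
      intro k
      rw [← Real.rpow_natCast ((2:ℝ) ^ (-(1:ℝ)/2)) k, ← Real.rpow_mul (by norm_num)]
      ring_nf
    simp only [this]
    apply summable_geometric_of_lt_one (by positivity)
    rw [show (-(1:ℝ)/2) = -(1/2) by ring, Real.rpow_neg (by norm_num)]
    rw [inv_lt_one_iff₀]
    right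
    calc (1:ℝ) = (2:ℝ) ^ (0:ℝ) := by simp
      _ < (2:ℝ) ^ ((1:ℝ)/2) := by
        apply Real.rpow_lt_rpow_of_exponent_lt (by norm_num) (by norm_num)
  have hfsum : Summable f := by
    rw [← summable_abs_iff]
    apply Summable.of_nonneg_of_le (fun p => abs_nonneg _) hbnd
    have := Summable.mul_of_nonneg (hgeo2.mul_left C) hgeo2
      (fun k => by positivity) (fun k => by positivity)
    exact this.congr (fun p => by ring)
  -- per-k identity
  have hk : ∀ k : ℕ, Ldiss α a k * (2:ℝ) ^ (-(k:ℝ)) = ∑' n : ℕ, f (k, n) := by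
    intro k
    have hksum : Summable (fun n => f (k, n)) := hfsum.prod_factor k
    have hsplit : (∑ n ∈ Finset.range (k+1), f (k, n)) + ∑' n : ℕ, f (k, n + (k+1))
        = ∑' n : ℕ, f (k, n) := Summable.sum_add_tsum_nat_add (k+1) hksum
    have e1 : ∑ n ∈ Finset.range (k+1), f (k, n) = ∑ n ∈ Finset.range k, f (k, n) := by
      rw [Finset.sum_range_succ, hdiag, add_zero]
    rw [← hsplit, e1]
    unfold Ldiss
    rw [add_mul, Finset.sum_mul, tsum_mul_right.symm]
    congr 1
    · apply Finset.sum_congr rfl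
      intro n hn
      have hnk : n < k := Finset.mem_range.mp hn
      have hmin : min k n = n := min_eq_right hnk.le
      have hmax : max k n = k := max_eq_left hnk.le
      simp only [hfdef, hmin, hmax]
      ring
    · apply tsum_congr
      intro n
      have hle : k ≤ k + 1 + n := by omega
      have hmin : min k (n + (k+1)) = k := min_eq_left (by omega)
      have hmax : max k (n + (k+1)) = n + (k+1) := max_eq_right (by omega)
      simp only [hfdef, hmin, hmax]
      have hidx : k + 1 + n = n + (k + 1) := by omega
      rw [hidx]
      push_cast
      rw [show -((n:ℝ) + ((k:ℝ) + 1)) = (-(1:ℝ) - (n:ℝ)) + (-(k:ℝ)) by ring,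
        Real.rpow_add (by norm_num : (0:ℝ) < 2)]
      ring
  -- combine
  have hmain : ∑' k : ℕ, Ldiss α a k * (2:ℝ) ^ (-(k:ℝ)) = ∑' p : ℕ × ℕ, f p := by
    rw [tsum_congr hk, ← Summable.tsum_prod' hfsum (fun b => hfsum.prod_factor b)]
  rw [hmain]
  have hswap : ∑' p : ℕ × ℕ, f p = - ∑' p : ℕ × ℕ, f p := by
    conv_lhs => rw [← Equiv.tsum_eq (Equiv.prodComm ℕ ℕ) f]
    have : ∀ p : ℕ × ℕ, f ((Equiv.prodComm ℕ ℕ) p) = - f p := by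
      intro p
      exact hanti p
    rw [tsum_congr this, tsum_neg]
  linarith
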